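/- arXiv:1302.4415 — 2 statements merged into one kernel-verified Lean document; each statement's English description precedes it below -/
import Mathlib

section
/- Let M = (V,E) be a set system and let ∂ denote the dual pivot (∂u = +u*u+u). Then X ∈ M∂V if and only if the number of sets Z ∈ E with X ⊆ Z is odd. In particular, ∅ ∈ M∂V if and only if |E| is odd. -/
open scoped symmDiff

variable {V : Type} [Fintype V] [DecidableEq V]

/-- pivot (twist) of a set system on `X` -/
def pivotOp (E : Finset (Finset V)) (X : Finset V) : Finset (Finset V) :=
  E.image (fun Y => Y ∆ X)

/-- loop complementation of a set system on `u` -/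
def loopC (E : Finset (Finset V)) (u : V) : Finset (Finset V) :=
  E ∆ ((E.filter (fun Y => u ∉ Y)).image (fun Y => insert u Y))

/-- the dual pivot ∂u = +u *u +u -/
def dualPivot (E : Finset (Finset V)) (u : V) : Finset (Finset V) :=
  loopC (pivotOp (loopC E u) {u}) u
lemma mem_pivotOp {E : Finset (Finset V)} {X Z : Finset V} :
    Z ∈ pivotOp E X ↔ Z ∆ X ∈ E := by
  simp only [pivotOp, Finset.mem_image]
  constructor
  · rintro ⟨Y, hY, rfl⟩; rwa [symmDiff_symmDiff_cancel_right]
  · intro h; exact ⟨Z ∆ X, h, symmDiff_symmDiff_cancel_right _ _⟩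

lemma symmDiff_singleton_mem {Z : Finset V} {u : V} (hu : u ∈ Z) :
    Z ∆ ({u} : Finset V) = Z.erase u := by
  ext x
  simp only [Finset.mem_symmDiff, Finset.mem_singleton, Finset.mem_erase]
  by_cases hx : x = u <;> simp [hx, hu]

lemma symmDiff_singleton_not_mem {Z : Finset V} {u : V} (hu : u ∉ Z) :
    Z ∆ ({u} : Finset V) = insert u Z := by
  ext x
  simp only [Finset.mem_symmDiff, Finset.mem_singleton, Finset.mem_insert]
  by_cases hx : x = u <;> simp [hx] <;> intro h <;> simp_all

lemma mem_loopC {E : Finset (Finset V)} {u : V} {Z : Finset V} :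
    Z ∈ loopC E u ↔ (if u ∈ Z then ¬(Z ∈ E ↔ Z.erase u ∈ E) else Z ∈ E) := by
  have himg : Z ∈ (E.filter (fun Y => u ∉ Y)).image (fun Y => insert u Y)
      ↔ (u ∈ Z ∧ Z.erase u ∈ E) := by
    simp only [Finset.mem_image, Finset.mem_filter]
    constructor
    · rintro ⟨Y, ⟨hYE, hY⟩, rfl⟩
      exact ⟨Finset.mem_insert_self _ _, by rwa [Finset.erase_insert hY]⟩
    · rintro ⟨hu, hE⟩
      exact ⟨Z.erase u, ⟨hE, Finset.notMem_erase u Z⟩, Finset.insert_erase hu⟩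
  rw [loopC, Finset.mem_symmDiff, himg]
  by_cases hu : u ∈ Z <;> simp [hu] <;> tauto

lemma mem_dualPivot {E : Finset (Finset V)} {u : V} {Z : Finset V} :
    Z ∈ dualPivot E u ↔
      (if u ∈ Z then Z ∈ E else ¬(Z ∈ E ↔ insert u Z ∈ E)) := by
  rw [dualPivot, mem_loopC]
  by_cases hu : u ∈ Z
  · simp only [hu, if_pos, mem_pivotOp,
      symmDiff_singleton_mem hu,
      symmDiff_singleton_not_mem (Finset.notMem_erase u Z),
      Finset.insert_erase hu, mem_loopC]
    simp [Finset.notMem_erase, hu]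
    tauto
  · simp only [hu, if_neg, mem_pivotOp, symmDiff_singleton_not_mem hu, mem_loopC,
      Finset.mem_insert_self, if_pos, Finset.erase_insert hu, if_true]
    simp [hu]
    tauto

noncomputable def chi (E : Finset (Finset V)) (Z : Finset V) : ZMod 2 :=
  if Z ∈ E then 1 else 0

lemma chi_dualPivot (E : Finset (Finset V)) (u : V) (Z : Finset V) :
    chi (dualPivot E u) Z =
      if u ∈ Z then chi E Z else chi E Z + chi E (insert u Z) := by
  by_cases hu : u ∈ Z
  · simp [chi, mem_dualPivot, hu]
  · by_cases h1 : Z ∈ E <;> by_cases h2 : insert u Z ∈ E <;>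
      simp [chi, mem_dualPivot, hu, h1, h2] <;> decide

lemma chi_foldl (l : List V) (hnd : l.Nodup) (E : Finset (Finset V)) (X : Finset V) :
    chi (l.foldl dualPivot E) X
      = ∑ Z ∈ Finset.univ.filter (fun Z : Finset V => X ⊆ Z ∧ Z ⊆ X ∪ l.toFinset),
          chi E Z := by
  induction l generalizing E with
  | nil =>
    have hset : Finset.univ.filter (fun Z : Finset V => X ⊆ Z ∧ Z ⊆ X ∪ ([] : List V).toFinset)
        = {X} := by
      ext Z
      simp [Finset.Subset.antisymm_iff, and_comm, eq_comm]
    rw [hset, Finset.sum_singleton, List.foldl_nil]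
  | cons u l ih =>
    rw [List.nodup_cons] at hnd
    rw [List.foldl_cons, ih hnd.2]
    have hS : (u :: l).toFinset = insert u l.toFinset := by simp
    by_cases hu : u ∈ X
    · have hsets : Finset.univ.filter (fun Z : Finset V => X ⊆ Z ∧ Z ⊆ X ∪ l.toFinset)
          = Finset.univ.filter (fun Z : Finset V => X ⊆ Z ∧ Z ⊆ X ∪ (u :: l).toFinset) := by
        ext Z
        simp only [Finset.mem_filter]
        rw [hS, Finset.union_insert, Finset.insert_eq_self.2 (Finset.mem_union_left _ hu)]
      rw [← hsets]
      refine Finset.sum_congr rfl fun Z hZ => ?_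
      obtain ⟨hXZ, -⟩ := (Finset.mem_filter.1 hZ).2
      rw [chi_dualPivot, if_pos (hXZ hu)]
    · have huS : u ∉ l.toFinset := by simpa using hnd.1
      set A := Finset.univ.filter (fun Z : Finset V => X ⊆ Z ∧ Z ⊆ X ∪ l.toFinset) with hA
      have hmemA : ∀ Z ∈ A, u ∉ Z := by
        intro Z hZ hcon
        obtain ⟨-, h2⟩ := (Finset.mem_filter.1 hZ).2
        rcases Finset.mem_union.1 (h2 hcon) with h | h
        · exact hu h
        · exact huS h
      have hdisj : Disjoint A (A.image (insert u)) := by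
        rw [Finset.disjoint_left]
        intro Z hZ hZ'
        obtain ⟨W, hW, rfl⟩ := Finset.mem_image.1 hZ'
        exact hmemA _ hZ (Finset.mem_insert_self u W)
      have hsets : Finset.univ.filter (fun Z : Finset V => X ⊆ Z ∧ Z ⊆ X ∪ (u :: l).toFinset)
          = A ∪ A.image (insert u) := by
        ext Z
        simp only [Finset.mem_union, Finset.mem_filter, Finset.mem_univ, true_and, hA,
          Finset.mem_image, hS]
        constructor
        · rintro ⟨h1, h2⟩
          by_cases huZ : u ∈ Z
          · right
            refine ⟨Z.erase u, ⟨?_, ?_⟩, Finset.insert_erase huZ⟩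
            · intro x hx
              exact Finset.mem_erase.2 ⟨fun h => hu (h ▸ hx), h1 hx⟩
            · intro x hx
              obtain ⟨hxu, hxZ⟩ := Finset.mem_erase.1 hx
              rcases Finset.mem_union.1 (h2 hxZ) with h | h
              · exact Finset.mem_union_left _ h
              · rcases Finset.mem_insert.1 h with h | h
                · exact absurd h hxu
                · exact Finset.mem_union_right _ h
          · left
            refine ⟨h1, fun x hx => ?_⟩
            rcases Finset.mem_union.1 (h2 hx) with h | h
            · exact Finset.mem_union_left _ h
            · rcases Finset.mem_insert.1 h with h | h
              · exact absurd (h ▸ hx) huZ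
              · exact Finset.mem_union_right _ h
        · rintro (⟨h1, h2⟩ | ⟨W, ⟨h1, h2⟩, rfl⟩)
          · exact ⟨h1, h2.trans (Finset.union_subset_union_right (by
              rw [hS] at hS ⊢; exact Finset.subset_insert _ _))⟩
          · constructor
            · exact h1.trans (Finset.subset_insert _ _)
            · intro x hx
              rcases Finset.mem_insert.1 hx with h | h
              · exact Finset.mem_union_right _ (by rw [h]; exact Finset.mem_insert_self u _)
              · rcases Finset.mem_union.1 (h2 h) with h' | h'
                · exact Finset.mem_union_left _ h'
                · exact Finset.mem_union_right _ (Finset.mem_insert_of_mem h')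
      have hinj : ∀ Z1 ∈ A, ∀ Z2 ∈ A, insert u Z1 = insert u Z2 → Z1 = Z2 := by
        intro Z1 h1 Z2 h2 heq
        have e1 := hmemA _ h1
        have e2 := hmemA _ h2
        rw [← Finset.erase_insert e1, ← Finset.erase_insert e2, heq]
      rw [hsets, Finset.sum_union hdisj, Finset.sum_image hinj,
        ← Finset.sum_add_distrib]
      refine Finset.sum_congr rfl fun Z hZ => ?_
      rw [chi_dualPivot, if_neg (hmemA _ hZ)]

lemma chi_eq_one_iff {E : Finset (Finset V)} {Z : Finset V} : chi E Z = 1 ↔ Z ∈ E := by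
  unfold chi; split <;> simp_all

lemma odd_iff_cast_zmod2 (n : ℕ) : Odd n ↔ (n : ZMod 2) = 1 := by
  rw [← Nat.not_even_iff_odd, even_iff_two_dvd, ← ZMod.natCast_eq_zero_iff]
  generalize (n : ZMod 2) = x
  revert x; decide

lemma sum_chi (E : Finset (Finset V)) (P : Finset V → Prop) [DecidablePred P] :
    ∑ Z ∈ Finset.univ.filter P, chi E Z = ((E.filter P).card : ZMod 2) := by
  unfold chi
  rw [Finset.sum_boole]
  congr 1
  rw [Finset.filter_filter]
  congr 1
  ext Z
  simp [and_comm]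

/-- X ∈ M∂V iff the number of Z ∈ E with X ⊆ Z is odd; in
particular ∅ ∈ M∂V iff |E| is odd. -/
theorem mem_dualPivot_univ_iff (E : Finset (Finset V))
    (l : List V) (hnd : l.Nodup) (huniv : l.toFinset = Finset.univ) :
    (∀ X : Finset V,
      X ∈ l.foldl dualPivot E ↔ Odd (E.filter (fun Z => X ⊆ Z)).card) ∧
    (∅ ∈ l.foldl dualPivot E ↔ Odd E.card) := by
  have main : ∀ X : Finset V,
      X ∈ l.foldl dualPivot E ↔ Odd (E.filter (fun Z => X ⊆ Z)).card := by
    intro X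
    rw [← chi_eq_one_iff, chi_foldl l hnd E X, odd_iff_cast_zmod2, ← sum_chi]
    have hset : Finset.univ.filter (fun Z : Finset V => X ⊆ Z ∧ Z ⊆ X ∪ l.toFinset)
        = Finset.univ.filter (fun Z : Finset V => X ⊆ Z) := by
      ext Z
      simp only [Finset.mem_filter, Finset.mem_univ, true_and, and_iff_left_iff_imp]
      intro _; rw [huniv]; exact (Finset.subset_univ Z).trans Finset.subset_union_right
    rw [hset]
  refine ⟨main, ?_⟩
  rw [main ∅, Finset.filter_true_of_mem (fun _ _ => Finset.empty_subset _)]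
end

section
/- Let F be a field of characteristic 2 and A a principally unimodular V×V matrix over F. Then for all X ⊆ V, M_{A+X} = M_A + X, where A+X denotes A + I_X (adding 1 to the diagonal entries indexed by X) and M+X denotes loop complementation on all elements of X. -/
open Matrix
open scoped symmDiff

variable {V : Type} [Fintype V] [DecidableEq V] {F : Type} [Field F]

/-- principal submatrix of A indexed by X -/
def pSub (A : Matrix V V F) (X : Finset V) : Matrix X X F :=
  Matrix.of fun i j => A i.1 j.1

open scoped Classical in
/-- the set system of index sets of nonsingular principal submatrices of A -/
noncomputable def MA (A : Matrix V V F) : Finset (Finset V) :=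
  Finset.univ.filter (fun X => (pSub A X).det ≠ 0)

/-- A is principally unimodular: all principal minors lie in {0,1,−1} -/
def PU (A : Matrix V V F) : Prop :=
  ∀ Y : Finset V, (pSub A Y).det ∈ ({0, 1, -1} : Set F)
set_option linter.unusedSectionVars false

def du (u : V) : Matrix V V F := Matrix.diagonal (fun i => if i = u then 1 else 0)

lemma pSub_add_du_of_not_mem (B : Matrix V V F) (u : V) (Y : Finset V) (hu : u ∉ Y) :
    pSub (B + du u) Y = pSub B Y := by
  ext i j
  have hne : ¬ (i.1 = u) := fun h => hu (h ▸ i.2)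
  simp [pSub, du, Matrix.diagonal_apply, hne]

def epsEquiv (u : V) (Y : Finset V) (hu : u ∈ Y) : (Unit ⊕ ↥(Y.erase u)) ≃ ↥Y where
  toFun x := x.elim (fun _ => ⟨u, hu⟩) (fun j => ⟨j.1, Finset.mem_of_mem_erase j.2⟩)
  invFun i := if h : i.1 = u then Sum.inl () else Sum.inr ⟨i.1, Finset.mem_erase.mpr ⟨h, i.2⟩⟩
  left_inv := by
    rintro (⟨⟩ | ⟨j, hj⟩)
    · simp
    · have : j ≠ u := (Finset.mem_erase.mp hj).1
      simp [this]
  right_inv := by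
    rintro ⟨i, hi⟩
    by_cases h : i = u
    · subst h; simp
    · simp [h]

lemma det_pSub_add_du (B : Matrix V V F) (u : V) (Y : Finset V) (hu : u ∈ Y) :
    (pSub (B + du u) Y).det = (pSub B Y).det + (pSub B (Y.erase u)).det := by
  set i₀ : ↥Y := (⟨u, hu⟩ : ↥Y) with hi₀
  have h1 : pSub (B + du u) Y
      = (pSub B Y).updateRow i₀ (pSub B Y i₀ + Pi.single i₀ 1) := by
    ext i j
    by_cases h : i = i₀
    · subst h
      simp only [Matrix.updateRow_self, pSub, Matrix.of_apply, Matrix.add_apply, du,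
        Matrix.diagonal_apply, Pi.add_apply]
      by_cases hij : i₀ = j
      · subst hij; simp [Pi.single_apply, hi₀]
      · have : ¬ (u = j.1) := fun h => hij (Subtype.ext h)
        simp [this, Pi.single_apply, hij]
    · rw [Matrix.updateRow_ne h]
      have : ¬ (i.1 = u) := fun hh => h (Subtype.ext hh)
      simp [pSub, du, Matrix.diagonal_apply, this]
  rw [h1, Matrix.det_updateRow_add, Matrix.updateRow_eq_self]
  congr 1
  rw [← Matrix.det_submatrix_equiv_self (epsEquiv u Y hu)]
  have h2 : ((pSub B Y).updateRow i₀ (Pi.single i₀ 1)).submatrix (epsEquiv u Y hu) (epsEquiv u Y hu)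
      = Matrix.fromBlocks 1 0 (Matrix.of fun (i : ↥(Y.erase u)) (_ : Unit) => B i.1 u)
          (pSub B (Y.erase u)) := by
    ext i j
    rcases i with _ | ⟨i, hi⟩ <;> rcases j with _ | ⟨j, hj⟩
    · simp [epsEquiv, Matrix.fromBlocks, Pi.single_apply, hi₀]
    · have : i₀ ≠ (⟨j, Finset.mem_of_mem_erase hj⟩ : ↥Y) := by
        intro h; exact (Finset.mem_erase.mp hj).1 (congrArg Subtype.val h).symm
      simp [epsEquiv, Matrix.fromBlocks, Pi.single_apply, this, hi₀, (Finset.mem_erase.mp hj).1]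
    · have hne : (⟨i, Finset.mem_of_mem_erase hi⟩ : ↥Y) ≠ i₀ := by
        intro h; exact (Finset.mem_erase.mp hi).1 (congrArg Subtype.val h)
      simp [epsEquiv, Matrix.fromBlocks, Matrix.updateRow_ne hne, pSub, hi₀, Matrix.updateRow_apply,
        (Finset.mem_erase.mp hi).1]
    · have hne : (⟨i, Finset.mem_of_mem_erase hi⟩ : ↥Y) ≠ i₀ := by
        intro h; exact (Finset.mem_erase.mp hi).1 (congrArg Subtype.val h)
      simp [epsEquiv, Matrix.fromBlocks, Matrix.updateRow_ne hne, pSub, hi₀, Matrix.updateRow_apply,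
        (Finset.mem_erase.mp hi).1]
  rw [h2, Matrix.det_fromBlocks_zero₁₂, Matrix.det_one, one_mul]

lemma pu01 [CharP F 2] {A : Matrix V V F} (h : PU A) (Y : Finset V) :
    (pSub A Y).det = 0 ∨ (pSub A Y).det = 1 := by
  rcases h Y with h | h | h
  · exact Or.inl h
  · exact Or.inr h
  · exact Or.inr (by rw [h, CharTwo.neg_eq])

lemma add01_ne_zero_iff [CharP F 2] {a b : F} (ha : a = 0 ∨ a = 1) (hb : b = 0 ∨ b = 1) :
    a + b ≠ 0 ↔ ((a ≠ 0 ∧ ¬ b ≠ 0) ∨ (b ≠ 0 ∧ ¬ a ≠ 0)) := by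
  rcases ha with rfl | rfl <;> rcases hb with rfl | rfl <;>
    simp [CharTwo.add_self_eq_zero, one_ne_zero]

lemma mem_MA_iff {A : Matrix V V F} {Y : Finset V} :
    Y ∈ MA A ↔ (pSub A Y).det ≠ 0 := by
  classical
  simp [MA]

lemma mem_loopC_of_mem {E : Finset (Finset V)} {u : V} {Y : Finset V} (hu : u ∈ Y) :
    Y ∈ loopC E u ↔ ((Y ∈ E ∧ Y.erase u ∉ E) ∨ (Y.erase u ∈ E ∧ Y ∉ E)) := by
  have himg : (Y ∈ (E.filter (fun Z => u ∉ Z)).image (fun Z => insert u Z)) ↔ Y.erase u ∈ E := by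
    simp only [Finset.mem_image, Finset.mem_filter]
    constructor
    · rintro ⟨Z, ⟨hZ, hZu⟩, rfl⟩
      rwa [Finset.erase_insert hZu]
    · intro h
      exact ⟨Y.erase u, ⟨h, Finset.notMem_erase u Y⟩, Finset.insert_erase hu⟩
  rw [loopC, Finset.mem_symmDiff, himg]

lemma mem_loopC_of_not_mem {E : Finset (Finset V)} {u : V} {Y : Finset V} (hu : u ∉ Y) :
    Y ∈ loopC E u ↔ Y ∈ E := by
  have himg : ¬ (Y ∈ (E.filter (fun Z => u ∉ Z)).image (fun Z => insert u Z)) := by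
    simp only [Finset.mem_image, Finset.mem_filter]
    rintro ⟨Z, -, rfl⟩
    exact hu (Finset.mem_insert_self u Z)
  rw [loopC, Finset.mem_symmDiff]
  simp [himg]

lemma PU_add_du [CharP F 2] {B : Matrix V V F} (hPU : PU B) (u : V) : PU (B + du u) := by
  intro Y
  by_cases hu : u ∈ Y
  · rw [show ((pSub (B + du u) Y).det) = (pSub B Y).det + (pSub B (Y.erase u)).det from
      det_pSub_add_du B u Y hu]
    rcases pu01 hPU Y with h1 | h1 <;> rcases pu01 hPU (Y.erase u) with h2 | h2 <;>
      rw [h1, h2] <;> simp [CharTwo.add_self_eq_zero]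
  · rw [pSub_add_du_of_not_mem B u Y hu]
    exact hPU Y

lemma MA_add_du [CharP F 2] (B : Matrix V V F) (hPU : PU B) (u : V) :
    MA (B + du u) = loopC (MA B) u := by
  ext Y
  by_cases hu : u ∈ Y
  · rw [mem_loopC_of_mem hu, mem_MA_iff, mem_MA_iff, mem_MA_iff,
      det_pSub_add_du B u Y hu]
    exact add01_ne_zero_iff (pu01 hPU Y) (pu01 hPU (Y.erase u))
  · rw [mem_loopC_of_not_mem hu, mem_MA_iff, mem_MA_iff,
      pSub_add_du_of_not_mem B u Y hu]

/-- over a field of characteristic 2, for a principally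
unimodular A and X ⊆ V, M_(A+I_X) equals the loop complementation of M_A
on all elements of X (applied in any order). -/
theorem pu_loopC [CharP F 2] (A : Matrix V V F) (hPU : PU A) (X : Finset V)
    (l : List V) (hnd : l.Nodup) (hX : l.toFinset = X) :
    MA (A + Matrix.diagonal (fun i => if i ∈ X then 1 else 0)) =
      l.foldl loopC (MA A) := by
  subst hX
  induction l generalizing A with
  | nil =>
      simp
  | cons u t ih =>
      have hu : u ∉ t := (List.nodup_cons.mp hnd).1
      have hndt : t.Nodup := (List.nodup_cons.mp hnd).2
      have hmat : A + Matrix.diagonal (fun i => if i ∈ (u :: t).toFinset then 1 else 0)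
          = (A + du u) + Matrix.diagonal (fun i => if i ∈ t.toFinset then 1 else 0) := by
        rw [add_assoc, du, Matrix.diagonal_add]
        refine congrArg (fun d => A + Matrix.diagonal d) (funext fun i => ?_)
        by_cases h : i = u
        · subst h
          simp [List.mem_toFinset, hu]
        · simp [h, List.mem_toFinset]
      rw [hmat, List.foldl_cons, ← MA_add_du A hPU u]
      exact ih (A + du u) (PU_add_du hPU u) hndt
end
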